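/- Let g ≥ 1, let A₁, B₁, …, A_g, B_g ∈ O(3,1) be Lorentz matrices, and let u₁, w₁, …, u_g, w_g ∈ ℝ⁴ be arbitrary vectors. Define c₀ = I and c_j = c_{j−1}·(A_j B_j A_j⁻¹ B_j⁻¹) for 1 ≤ j ≤ g. Suppose v ∈ ℝ⁴ satisfies A_i v = v and B_i v = v for all i, and ⟨v, v⟩ ≠ 0, where ⟨·,·⟩ is the Minkowski inner product. If an integer e satisfies e·v = Σ_{i=1}^{g} [ c_{i−1}(I − A_i B_i A_i⁻¹) u_i + c_{i−1} A_i (I − B_i A_i⁻¹ B_i⁻¹) w_i ], then e = 0. -/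

import Mathlib

open Matrix

/-- The Minkowski Gram matrix `η = diag(1, 1, 1, −1)`. -/
noncomputable def eta : Matrix (Fin 4) (Fin 4) ℝ :=
  Matrix.diagonal ![1, 1, 1, -1]

/-- The Lorentz group `O(3,1)` as a set of `4 × 4` real matrices. -/
noncomputable def O31 : Set (Matrix (Fin 4) (Fin 4) ℝ) :=
  {A | Aᵀ * eta * A = eta}

/-- The Minkowski inner product `⟨u, v⟩ = u₁v₁ + u₂v₂ + u₃v₃ − u₄v₄` on `ℝ⁴`. -/
noncomputable def minkInner (u v : Fin 4 → ℝ) : ℝ :=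
  u 0 * v 0 + u 1 * v 1 + u 2 * v 2 - u 3 * v 3

/-- `c_{i-1} = [A₁,B₁]⋯[A_{i-1},B_{i-1}]`, the ordered product of the first `i`
commutators (so `cPrev A B 0 = 1`). -/
noncomputable def cPrev {g : ℕ} (A B : Fin g → Matrix (Fin 4) (Fin 4) ℝ) (i : Fin g) :
    Matrix (Fin 4) (Fin 4) ℝ :=
  (List.ofFn fun j : Fin (i : ℕ) =>
    A (Fin.castLE i.isLt.le j) * B (Fin.castLE i.isLt.le j) *
      (A (Fin.castLE i.isLt.le j))⁻¹ * (B (Fin.castLE i.isLt.le j))⁻¹).prod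

lemma minkInner_eq (u v : Fin 4 → ℝ) : minkInner u v = u ⬝ᵥ (eta *ᵥ v) := by
  simp [minkInner, eta, mulVec, dotProduct, Fin.sum_univ_four, Matrix.diagonal]
  ring

lemma det_eta : eta.det = -1 := by
  simp [eta, Matrix.det_diagonal, Fin.prod_univ_four]

lemma isUnit_of_O31 {M : Matrix (Fin 4) (Fin 4) ℝ} (hM : M ∈ O31) : IsUnit M.det := by
  have h := congrArg Matrix.det hM
  simp [Matrix.det_mul, det_eta] at h
  have : M.det ≠ 0 := by intro h0; rw [h0] at h; simp at h
  exact this.isUnit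

lemma O31_preserves {M : Matrix (Fin 4) (Fin 4) ℝ} (hM : M ∈ O31) (x y : Fin 4 → ℝ) :
    minkInner (M *ᵥ x) (M *ᵥ y) = minkInner x y := by
  rw [minkInner_eq, minkInner_eq]
  calc (M *ᵥ x) ⬝ᵥ (eta *ᵥ (M *ᵥ y))
      = (M *ᵥ x) ⬝ᵥ ((eta * M) *ᵥ y) := by rw [mulVec_mulVec]
    _ = ((M *ᵥ x) ᵥ* (eta * M)) ⬝ᵥ y := by rw [dotProduct_mulVec]
    _ = ((x ᵥ* Mᵀ) ᵥ* (eta * M)) ⬝ᵥ y := by rw [← vecMul_transpose]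
    _ = (x ᵥ* (Mᵀ * (eta * M))) ⬝ᵥ y := by rw [vecMul_vecMul]
    _ = (x ᵥ* eta) ⬝ᵥ y := by rw [← mul_assoc, hM]
    _ = x ⬝ᵥ (eta *ᵥ y) := by rw [dotProduct_mulVec]

lemma O31_one : (1 : Matrix (Fin 4) (Fin 4) ℝ) ∈ O31 := by
  simp [O31]

lemma O31_mul {M N : Matrix (Fin 4) (Fin 4) ℝ} (hM : M ∈ O31) (hN : N ∈ O31) :
    M * N ∈ O31 := by
  have : (M * N)ᵀ * eta * (M * N) = Nᵀ * (Mᵀ * eta * M) * N := by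
    rw [Matrix.transpose_mul]; noncomm_ring
  simp only [O31, Set.mem_setOf_eq] at *
  rw [this, hM, hN]

lemma O31_inv {M : Matrix (Fin 4) (Fin 4) ℝ} (hM : M ∈ O31) : M⁻¹ ∈ O31 := by
  have hd := isUnit_of_O31 hM
  have hdt : IsUnit Mᵀ.det := by rwa [Matrix.det_transpose]
  have h1 : M⁻¹ * M = 1 := nonsing_inv_mul M hd
  have h2 : (Mᵀ)⁻¹ * Mᵀ = 1 := nonsing_inv_mul Mᵀ hdt
  simp only [O31, Set.mem_setOf_eq] at *
  calc (M⁻¹)ᵀ * eta * M⁻¹ = (Mᵀ)⁻¹ * eta * M⁻¹ := by rw [Matrix.transpose_nonsing_inv]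
    _ = (Mᵀ)⁻¹ * (Mᵀ * eta * M) * M⁻¹ := by rw [hM]
    _ = ((Mᵀ)⁻¹ * Mᵀ) * eta * (M * M⁻¹) := by noncomm_ring
    _ = eta := by rw [h2, mul_nonsing_inv M hd]; simp

lemma fix_inv {M : Matrix (Fin 4) (Fin 4) ℝ} (hM : M ∈ O31) {v : Fin 4 → ℝ}
    (hv : M *ᵥ v = v) : M⁻¹ *ᵥ v = v := by
  conv_lhs => rw [← hv]
  rw [mulVec_mulVec, nonsing_inv_mul M (isUnit_of_O31 hM), one_mulVec]

lemma minkInner_fix {M : Matrix (Fin 4) (Fin 4) ℝ} (hM : M ∈ O31) {v : Fin 4 → ℝ}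
    (hv : M *ᵥ v = v) (x : Fin 4 → ℝ) : minkInner (M *ᵥ x) v = minkInner x v := by
  conv_lhs => rw [← hv]
  exact O31_preserves hM x v

lemma minkInner_sum {ι : Type*} (s : Finset ι) (f : ι → Fin 4 → ℝ) (v : Fin 4 → ℝ) :
    minkInner (∑ i ∈ s, f i) v = ∑ i ∈ s, minkInner (f i) v := by
  simp only [minkInner, Finset.sum_apply, Finset.sum_mul]
  rw [← Finset.sum_add_distrib, ← Finset.sum_add_distrib, ← Finset.sum_sub_distrib]

lemma minkInner_add (x y v : Fin 4 → ℝ) :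
    minkInner (x + y) v = minkInner x v + minkInner y v := by
  simp [minkInner]; ring

lemma list_prod_fix (v : Fin 4 → ℝ) :
    ∀ l : List (Matrix (Fin 4) (Fin 4) ℝ),
      (∀ M ∈ l, M ∈ O31 ∧ M *ᵥ v = v) → l.prod ∈ O31 ∧ l.prod *ᵥ v = v := by
  intro l
  induction l with
  | nil => intro _; exact ⟨by simpa using O31_one, by simp⟩
  | cons M l ih =>
    intro h
    have hM := h M List.mem_cons_self
    have hl := ih (fun N hN => h N (List.mem_cons_of_mem _ hN))
    refine ⟨?_, ?_⟩
    · rw [List.prod_cons]; exact O31_mul hM.1 hl.1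
    · rw [List.prod_cons, ← mulVec_mulVec, hl.2, hM.2]

/-- The Fox-differential computation in Case 1 of the main theorem:
if `v` is a common fixed vector of Lorentz matrices `A₁, B₁, …, A_g, B_g` with
`⟨v, v⟩ ≠ 0`, and an integer `e` satisfies
`e·v = Σᵢ [c_{i−1}(I − AᵢBᵢAᵢ⁻¹) uᵢ + c_{i−1} Aᵢ (I − BᵢAᵢ⁻¹Bᵢ⁻¹) wᵢ]`,
then `e = 0`. -/
theorem euler_number_vanishes
    (g : ℕ) (hg : 1 ≤ g)
    (A B : Fin g → Matrix (Fin 4) (Fin 4) ℝ)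
    (hA : ∀ i, A i ∈ O31) (hB : ∀ i, B i ∈ O31)
    (u w : Fin g → (Fin 4 → ℝ))
    (v : Fin 4 → ℝ)
    (hAv : ∀ i, A i *ᵥ v = v) (hBv : ∀ i, B i *ᵥ v = v)
    (hv : minkInner v v ≠ 0)
    (e : ℤ)
    (he : (e : ℝ) • v =
      ∑ i : Fin g,
        (cPrev A B i *ᵥ ((1 - A i * B i * (A i)⁻¹) *ᵥ u i) +
          (cPrev A B i * A i) *ᵥ ((1 - B i * (A i)⁻¹ * (B i)⁻¹) *ᵥ w i))) :
    e = 0 := by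
  have hc : ∀ i : Fin g, cPrev A B i ∈ O31 ∧ cPrev A B i *ᵥ v = v := by
    intro i
    apply list_prod_fix
    intro M hM
    rw [List.mem_ofFn] at hM
    obtain ⟨j, rfl⟩ := hM
    set k := Fin.castLE i.isLt.le j
    exact ⟨O31_mul (O31_mul (O31_mul (hA k) (hB k)) (O31_inv (hA k))) (O31_inv (hB k)),
      by rw [← mulVec_mulVec, ← mulVec_mulVec, ← mulVec_mulVec,
        fix_inv (hB k) (hBv k), fix_inv (hA k) (hAv k), hBv k, hAv k]⟩
  have key := congrArg (fun x => minkInner x v) he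
  have hsmul : minkInner ((e : ℝ) • v) v = (e : ℝ) * minkInner v v := by
    simp [minkInner]; ring
  have hsum : minkInner
      (∑ i : Fin g,
        (cPrev A B i *ᵥ ((1 - A i * B i * (A i)⁻¹) *ᵥ u i) +
          (cPrev A B i * A i) *ᵥ ((1 - B i * (A i)⁻¹ * (B i)⁻¹) *ᵥ w i))) v = 0 := by
    rw [minkInner_sum]
    apply Finset.sum_eq_zero
    intro i _
    rw [minkInner_add]
    have hABAinv : A i * B i * (A i)⁻¹ ∈ O31 :=
      O31_mul (O31_mul (hA i) (hB i)) (O31_inv (hA i))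
    have hABAinv_fix : (A i * B i * (A i)⁻¹) *ᵥ v = v := by
      rw [← mulVec_mulVec, ← mulVec_mulVec, fix_inv (hA i) (hAv i), hBv i, hAv i]
    have hBAB : B i * (A i)⁻¹ * (B i)⁻¹ ∈ O31 :=
      O31_mul (O31_mul (hB i) (O31_inv (hA i))) (O31_inv (hB i))
    have hBAB_fix : (B i * (A i)⁻¹ * (B i)⁻¹) *ᵥ v = v := by
      rw [← mulVec_mulVec, ← mulVec_mulVec, fix_inv (hB i) (hBv i),
        fix_inv (hA i) (hAv i), hBv i]
    have t1 : minkInner (cPrev A B i *ᵥ ((1 - A i * B i * (A i)⁻¹) *ᵥ u i)) v = 0 := by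
      rw [minkInner_fix (hc i).1 (hc i).2, sub_mulVec, one_mulVec]
      have : minkInner (u i - (A i * B i * (A i)⁻¹) *ᵥ u i) v =
          minkInner (u i) v - minkInner ((A i * B i * (A i)⁻¹) *ᵥ u i) v := by
        simp [minkInner]; ring
      rw [this, minkInner_fix hABAinv hABAinv_fix, sub_self]
    have t2 : minkInner ((cPrev A B i * A i) *ᵥ ((1 - B i * (A i)⁻¹ * (B i)⁻¹) *ᵥ w i)) v
        = 0 := by
      rw [← mulVec_mulVec, minkInner_fix (hc i).1 (hc i).2,
        minkInner_fix (hA i) (hAv i), sub_mulVec, one_mulVec]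
      have : minkInner (w i - (B i * (A i)⁻¹ * (B i)⁻¹) *ᵥ w i) v =
          minkInner (w i) v - minkInner ((B i * (A i)⁻¹ * (B i)⁻¹) *ᵥ w i) v := by
        simp [minkInner]; ring
      rw [this, minkInner_fix hBAB hBAB_fix, sub_self]
    rw [t1, t2, add_zero]
  rw [hsmul, hsum] at key
  have : (e : ℝ) = 0 := by
    rcases mul_eq_zero.mp key with h | h
    · exact h
    · exact absurd h hv
  exact_mod_cast this
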